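/- Let H be a Hopf algebra over ℂ with counit ε, let B be a ℂ-algebra, let K ∈ B⊗H, and let J, X ∈ H⊗H be invertible elements with (id⊗ε)(J) = 1 and (id⊗ε)(X) = 1. Assume the axiom (K3): (id_B⊗Δ)(K) = J₂₃⁻¹·K₁₃·X₂₃·K₁₂ in B⊗H⊗H. Then K = (((id_B⊗ε)(K))⊗1_H)·K in B⊗H; consequently e := (id_B⊗ε)(K) ∈ B is an idempotent (e² = e), and if K is invertible in B⊗H then e = 1. -/

import Mathlib

open scoped TensorProduct

noncomputable section

section Maps
variable (B H : Type*) [Ring B] [Algebra ℂ B] [Ring H] [HopfAlgebra ℂ H]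

/-- The insertion `K ↦ K₁₂` of `B⊗H` into `B⊗H⊗H`. -/
def K12m : (B ⊗[ℂ] H) →ₐ[ℂ] B ⊗[ℂ] (H ⊗[ℂ] H) :=
  Algebra.TensorProduct.map (AlgHom.id ℂ B) Algebra.TensorProduct.includeLeft

/-- The insertion `K ↦ K₁₃` of `B⊗H` into `B⊗H⊗H`. -/
def K13m : (B ⊗[ℂ] H) →ₐ[ℂ] B ⊗[ℂ] (H ⊗[ℂ] H) :=
  Algebra.TensorProduct.map (AlgHom.id ℂ B) Algebra.TensorProduct.includeRight

/-- The insertion `X ↦ X₂₃` of `H⊗H` into `B⊗H⊗H`. -/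
def i23 : (H ⊗[ℂ] H) →ₐ[ℂ] B ⊗[ℂ] (H ⊗[ℂ] H) := Algebra.TensorProduct.includeRight

/-- `id_B ⊗ Δ : B⊗H → B⊗(H⊗H)`. -/
def comulB : (B ⊗[ℂ] H) →ₐ[ℂ] B ⊗[ℂ] (H ⊗[ℂ] H) :=
  Algebra.TensorProduct.map (AlgHom.id ℂ B) (Bialgebra.comulAlgHom ℂ H)

/-- `(id_B ⊗ ε)(K)`, as an element of `B`. -/
def idepsB : (B ⊗[ℂ] H) →ₐ[ℂ] B :=
  (Algebra.TensorProduct.rid ℂ ℂ B).toAlgHom.comp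
    (Algebra.TensorProduct.map (AlgHom.id ℂ B) (Bialgebra.counitAlgHom ℂ H))

/-- `(id_H ⊗ ε)(X)`, as an element of `H`. -/
def idepsH : (H ⊗[ℂ] H) →ₐ[ℂ] H :=
  (Algebra.TensorProduct.rid ℂ ℂ H).toAlgHom.comp
    (Algebra.TensorProduct.map (AlgHom.id ℂ H) (Bialgebra.counitAlgHom ℂ H))

end Maps

section Aux
variable (B H : Type*) [Ring B] [Algebra ℂ B] [Ring H] [HopfAlgebra ℂ H]

/-- `id_B ⊗ (id_H ⊗ ε) : B⊗(H⊗H) → B⊗H`. -/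
def Emap : (B ⊗[ℂ] (H ⊗[ℂ] H)) →ₐ[ℂ] B ⊗[ℂ] H :=
  Algebra.TensorProduct.map (AlgHom.id ℂ B) (idepsH H)

lemma idepsH_eq (x : H ⊗[ℂ] H) :
    idepsH H x = TensorProduct.rid ℂ H ((Coalgebra.counit (R := ℂ) (A := H)).lTensor H x) := by
  induction x using TensorProduct.induction_on with
  | zero => simp
  | tmul h k => simp [idepsH, Algebra.TensorProduct.rid_tmul]
  | add a b ha hb => simp [map_add, ha, hb]

lemma idepsH_comul (a : H) : idepsH H (Bialgebra.comulAlgHom ℂ H a) = a := by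
  have h : (Bialgebra.comulAlgHom ℂ H a : H ⊗[ℂ] H) = Coalgebra.comul a := rfl
  rw [idepsH_eq, h, Coalgebra.lTensor_counit_comul]
  simp

lemma idepsH_left (h : H) : idepsH H (h ⊗ₜ[ℂ] 1) = h := by
  rw [idepsH_eq]; simp

lemma idepsB_tmul (b : B) (h : H) :
    idepsB B H (b ⊗ₜ[ℂ] h) = (Coalgebra.counit (R := ℂ) h : ℂ) • b := by
  simp [idepsB, Algebra.TensorProduct.rid_tmul]

lemma idepsB_includeLeft (b : B) :
    idepsB B H ((Algebra.TensorProduct.includeLeft : B →ₐ[ℂ] B ⊗[ℂ] H) b) = b := by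
  simp [idepsB]

lemma E_comulB (K : B ⊗[ℂ] H) : Emap B H (comulB B H K) = K := by
  induction K using TensorProduct.induction_on with
  | zero => simp
  | tmul b h =>
      simp only [Emap, comulB, Algebra.TensorProduct.map_tmul, AlgHom.coe_id, id_eq,
        idepsH_comul]
  | add a b ha hb => simp [map_add, ha, hb]

lemma E_K12 (K : B ⊗[ℂ] H) : Emap B H (K12m B H K) = K := by
  induction K using TensorProduct.induction_on with
  | zero => simp
  | tmul b h =>
      simp only [Emap, K12m, Algebra.TensorProduct.map_tmul, AlgHom.coe_id, id_eq,
        Algebra.TensorProduct.includeLeft_apply]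
      rw [idepsH_left]
  | add a b ha hb => simp [map_add, ha, hb]

lemma E_K13 (K : B ⊗[ℂ] H) :
    Emap B H (K13m B H K) =
      (Algebra.TensorProduct.includeLeft : B →ₐ[ℂ] B ⊗[ℂ] H) (idepsB B H K) := by
  induction K using TensorProduct.induction_on with
  | zero => simp
  | tmul b h =>
      simp only [Emap, K13m, Algebra.TensorProduct.map_tmul, AlgHom.coe_id, id_eq,
        Algebra.TensorProduct.includeRight_apply, Algebra.TensorProduct.includeLeft_apply,
        idepsB_tmul, idepsH_eq]
      rw [LinearMap.lTensor_tmul, TensorProduct.rid_tmul, TensorProduct.tmul_smul,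
        TensorProduct.smul_tmul']
  | add a b ha hb => simp [map_add, ha, hb]

lemma E_i23 (Y : H ⊗[ℂ] H) :
    Emap B H (i23 B H Y) =
      (Algebra.TensorProduct.includeRight : H →ₐ[ℂ] B ⊗[ℂ] H) (idepsH H Y) := by
  simp [Emap, i23]

end Aux

/-- Let `H` be a Hopf algebra over ℂ with counit `ε`, `B` a ℂ-algebra,
`K ∈ B⊗H`, and `J, X ∈ H⊗H` invertible with `(id⊗ε)(J) = 1` and `(id⊗ε)(X) = 1`.
If `(id_B⊗Δ)(K) = J₂₃⁻¹ K₁₃ X₂₃ K₁₂`, then `K = ((id_B⊗ε)(K) ⊗ 1_H)·K`; consequently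
`e := (id_B⊗ε)(K)` is an idempotent, and if `K` is invertible then `e = 1`. -/
theorem statement3 (B H : Type*) [Ring B] [Algebra ℂ B] [Ring H] [HopfAlgebra ℂ H]
    (K : B ⊗[ℂ] H) (J X Jinv Xinv : H ⊗[ℂ] H)
    (hJ : J * Jinv = 1) (hJ' : Jinv * J = 1)
    (hX : X * Xinv = 1) (hX' : Xinv * X = 1)
    (hJeps : idepsH H J = 1) (hXeps : idepsH H X = 1)
    (hK3 : comulB B H K = i23 B H Jinv * K13m B H K * i23 B H X * K12m B H K) :
    K = (Algebra.TensorProduct.includeLeft : B →ₐ[ℂ] B ⊗[ℂ] H) (idepsB B H K) * K ∧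
    idepsB B H K * idepsB B H K = idepsB B H K ∧
    (IsUnit K → idepsB B H K = 1) := by
  have hJi : idepsH H Jinv = 1 := by
    have h1 : idepsH H J * idepsH H Jinv = 1 := by rw [← map_mul, hJ, map_one]
    rwa [hJeps, one_mul] at h1
  have h := congrArg (Emap B H) hK3
  simp only [map_mul, E_comulB, E_K12, E_K13, E_i23, hJi, hXeps, map_one, one_mul,
    mul_one] at h
  refine ⟨h, ?_, ?_⟩
  · have h2 := congrArg (idepsB B H) h
    rw [map_mul, idepsB_includeLeft] at h2
    exact h2.symm
  · intro hu
    obtain ⟨Ki, hKi⟩ := hu.exists_right_inv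
    have h3 : (Algebra.TensorProduct.includeLeft : B →ₐ[ℂ] B ⊗[ℂ] H) (idepsB B H K) = 1 := by
      calc (Algebra.TensorProduct.includeLeft : B →ₐ[ℂ] B ⊗[ℂ] H) (idepsB B H K)
          = (Algebra.TensorProduct.includeLeft : B →ₐ[ℂ] B ⊗[ℂ] H) (idepsB B H K) * (K * Ki) := by
            rw [hKi, mul_one]
        _ = K * Ki := by rw [← mul_assoc, ← h]
        _ = 1 := hKi
    have h4 := congrArg (idepsB B H) h3
    rwa [idepsB_includeLeft, map_one] at h4
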